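/- Let R(t) = 256(t^2-t+1)^3/(t^2(1-t)^2). For all real t < -1 with R(t) ≥ 1000000, we have R(-t) ≥ R(t) - 32√(R(t)). -/

import Mathlib

noncomputable def R (t : ℝ) : ℝ := 256 * (t ^ 2 - t + 1) ^ 3 / (t ^ 2 * (1 - t) ^ 2)

theorem stmt2 (t : ℝ) (h1 : t < -1) (h3 : R t ≥ 1000000) :
    R (-t) ≥ R t - 32 * Real.sqrt (R t) := by
  have ht0 : t ≠ 0 := by intro h; rw [h] at h1; norm_num at h1
  have h1m : (1 : ℝ) - t ≠ 0 := by intro h; nlinarith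
  have h1p : (1 : ℝ) + t ≠ 0 := by intro h; nlinarith
  have hApos : (0:ℝ) ≤ R t := by linarith
  have hsq : Real.sqrt (R t) ≥ 0 := Real.sqrt_nonneg _
  have hD : R t - R (-t) =
      512 * (-t) * (t^2+1) * (t^4 - 3*t^2 + 1) / (t^2 * (1-t)^2 * (1+t)^2) := by
    simp only [R]
    have h1p' : (1:ℝ) - -t ≠ 0 := by rwa [sub_neg_eq_add]
    field_simp
    ring
  have hdenpos : (0:ℝ) < t^2 * (1-t)^2 * (1+t)^2 := by positivity
  rcases le_or_gt (t^4 - 3*t^2 + 1) 0 with hc | hc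
  · -- difference is ≤ 0, trivial
    have hnum : 512 * (-t) * (t^2+1) * (t^4 - 3*t^2 + 1) ≤ 0 := by
      have e : 0 ≤ (-t) * (t^2+1) * (-(t^4 - 3*t^2 + 1)) :=
        mul_nonneg (mul_nonneg (by linarith) (by positivity)) (by linarith)
      nlinarith [e]
    have : R t - R (-t) ≤ 0 := by
      rw [hD]
      exact div_nonpos_of_nonpos_of_nonneg hnum hdenpos.le
    nlinarith
  · -- difference is ≥ 0; show (R t - R(-t))^2 ≤ 1024 * R t
    have hDpos : 0 ≤ R t - R (-t) := by
      rw [hD]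
      have hnum : 0 ≤ 512 * (-t) * (t^2+1) * (t^4 - 3*t^2 + 1) := by
      
        have e : 0 ≤ (-t) * (t^2+1) * (t^4 - 3*t^2 + 1) :=
          mul_nonneg (mul_nonneg (by linarith) (by positivity)) hc.le
        nlinarith [e]
      exact div_nonneg hnum hdenpos.le
    have hg : (t^2 - t + 1)^3 * (1-t)^2 * (1+t)^4 - (t^2+1)^2 * (t^4-3*t^2+1)^2 =
        (-t) * (t^2+1) * (t^2-1)^2 * (t^4-3*t^2+1)
          + 3 * t^2 * (t^2+1)^2 * (t^4-3*t^2+1) + 8 * t^6 := by ring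
    have hgpos : 0 ≤ (t^2 - t + 1)^3 * (1-t)^2 * (1+t)^4 - (t^2+1)^2 * (t^4-3*t^2+1)^2 := by
      rw [hg]
      have e1 : 0 ≤ (-t) * (t^2+1) * (t^2-1)^2 * (t^4-3*t^2+1) :=
        mul_nonneg (mul_nonneg (mul_nonneg (by linarith) (by positivity)) (by positivity)) hc.le
      have e2 : 0 ≤ 3 * t^2 * (t^2+1)^2 * (t^4-3*t^2+1) :=
        mul_nonneg (by positivity) hc.le
      have e3 : 0 ≤ 8 * t^6 := by positivity
      linarith
    have hkey : (R t - R (-t))^2 ≤ 1024 * R t := by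
      have hA' : R t = 256 * (t ^ 2 - t + 1) ^ 3 / (t ^ 2 * (1 - t) ^ 2) := rfl
      have hdiff : 1024 * R t - (R t - R (-t))^2 =
          262144 * ((t^2 - t + 1)^3 * (1-t)^2 * (1+t)^4 - (t^2+1)^2 * (t^4-3*t^2+1)^2)
            / (t^2 * (1-t)^4 * (1+t)^4) := by
        rw [hD, hA']
        field_simp
        ring
      have : 0 ≤ 1024 * R t - (R t - R (-t))^2 := by
        rw [hdiff]
        apply div_nonneg
        · linarith
        · positivity
      linarith
    have hle : R t - R (-t) ≤ 32 * Real.sqrt (R t) := by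
      have h32 : 32 * Real.sqrt (R t) = Real.sqrt (1024 * R t) := by
        rw [show (1024:ℝ) = 32^2 by norm_num, Real.sqrt_mul (by positivity),
          Real.sqrt_sq (by norm_num : (0:ℝ) ≤ 32)]
      rw [h32]
      calc R t - R (-t) = Real.sqrt ((R t - R (-t))^2) := (Real.sqrt_sq hDpos).symm
        _ ≤ Real.sqrt (1024 * R t) := Real.sqrt_le_sqrt hkey
    linarith
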